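/- arXiv:2501.15559 — 4 statements merged into one kernel-verified Lean document; each statement's English description precedes it below -/
import Mathlib

section
/- Let X₁,…,Xₙ be independent random variables with Xᵢ ∈ [0,1] almost surely, E[Xᵢ] = μᵢ, and set X̄ = (1/n)Σᵢ Xᵢ, μ = (1/n)Σᵢ μᵢ. Then for any γ ∈ ℝ, E[exp(n·d_γ(X̄ ‖ μ))] ≤ 1, where d_γ(p‖q) = γp − log(1 − q + q·e^γ). -/
open MeasureTheory ProbabilityTheory Real

/-- Relaxed binary relative entropy `d_γ(p‖q) = γp − log(1 − q + q e^γ)`. -/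
noncomputable def binKLRelaxed (γ p q : ℝ) : ℝ :=
  γ * p - Real.log (1 - q + q * Real.exp γ)

theorem div_le_div_of_nonneg_right_aux {a b c : ℝ} (hc : 0 < c) (h : a ≤ b) :
    a / c ≤ b / c := by
  gcongr

/-- Hoeffding-type exponential moment bound: for independent `[0,1]`-valued
random variables `X₁,…,Xₙ` with means `μᵢ`, sample mean `X̄` and mean average `μ`,
for any `γ`, `E[exp(n · d_γ(X̄‖μ))] ≤ 1`. -/
theorem exp_relaxedBinKL_le_one {Ω : Type*} [MeasurableSpace Ω]
    (μ : Measure Ω) [IsProbabilityMeasure μ]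
    (n : ℕ) (hn : 0 < n) (X : Fin n → Ω → ℝ)
    (hmeas : ∀ i, Measurable (X i))
    (hindep : iIndepFun X μ)
    (hbound : ∀ i, ∀ᵐ ω ∂μ, X i ω ∈ Set.Icc (0:ℝ) 1)
    (γ : ℝ) :
    ∫ ω, Real.exp ((n : ℝ) *
        binKLRelaxed γ ((∑ i, X i ω) / n) ((∑ i, ∫ ω', X i ω' ∂μ) / n)) ∂μ ≤ 1 := by
  have hE : 0 < Real.exp γ := Real.exp_pos γ
  set m : Fin n → ℝ := fun i => ∫ ω', X i ω' ∂μ with hm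
  -- integrability of X i
  have hXint : ∀ i, Integrable (X i) μ := by
    intro i
    refine Integrable.mono' (integrable_const 1) (hmeas i).aestronglyMeasurable ?_
    filter_upwards [hbound i] with ω hω
    rw [Real.norm_eq_abs, abs_le]; exact ⟨by linarith [hω.1], hω.2⟩
  have hm01 : ∀ i, 0 ≤ m i ∧ m i ≤ 1 := by
    intro i
    constructor
    · exact integral_nonneg_of_ae ((hbound i).mono fun ω hω => hω.1)
    · calc m i ≤ ∫ _, (1:ℝ) ∂μ :=
            integral_mono_ae (hXint i) (integrable_const 1)
              ((hbound i).mono fun ω hω => hω.2)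
        _ = 1 := by simp
  set μb : ℝ := (∑ i, m i) / n with hμb
  have hμb0 : 0 ≤ μb := by
    apply div_nonneg _ (Nat.cast_nonneg n)
    exact Finset.sum_nonneg fun i _ => (hm01 i).1
  have hμb1 : μb ≤ 1 := by
    rw [hμb, div_le_one (by exact_mod_cast hn)]
    calc (∑ i, m i) ≤ ∑ _i : Fin n, (1:ℝ) :=
          Finset.sum_le_sum fun i _ => (hm01 i).2
      _ = n := by simp
  set c : ℝ := 1 - μb + μb * Real.exp γ with hc
  have hcpos : 0 < c := by
    rcases eq_or_lt_of_le hμb0 with h | h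
    · simp [hc, ← h]
    · have : 0 < μb * Real.exp γ := mul_pos h hE
      nlinarith
  -- pointwise convexity bound
  have hconv : ∀ x : ℝ, x ∈ Set.Icc (0:ℝ) 1 →
      Real.exp (γ * x) ≤ 1 - x + x * Real.exp γ := by
    intro x hx
    have h := convexOn_exp.2 (Set.mem_univ (0:ℝ)) (Set.mem_univ γ)
      (by linarith [hx.2] : (0:ℝ) ≤ 1 - x) hx.1 (by ring)
    simp only [smul_eq_mul, mul_zero, zero_add, Real.exp_zero, mul_one] at h
    calc Real.exp (γ * x) = Real.exp (x * γ) := by rw [mul_comm]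
      _ ≤ (1 - x) + x * Real.exp γ := h
      _ = 1 - x + x * Real.exp γ := by ring
  -- integrability of exp(γ X i)
  have hExpInt : ∀ i, Integrable (fun ω => Real.exp (γ * X i ω)) μ := by
    intro i
    refine Integrable.mono' (integrable_const (Real.exp |γ|))
      ((hmeas i).const_mul γ).exp.aestronglyMeasurable ?_
    filter_upwards [hbound i] with ω hω
    rw [Real.norm_eq_abs, abs_of_pos (Real.exp_pos _)]
    apply Real.exp_le_exp.2
    calc γ * X i ω ≤ |γ * X i ω| := le_abs_self _
      _ = |γ| * |X i ω| := abs_mul _ _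
      _ ≤ |γ| * 1 := by
          apply mul_le_mul_of_nonneg_left _ (abs_nonneg γ)
          rw [abs_le]; exact ⟨by linarith [hω.1], hω.2⟩
      _ = |γ| := mul_one _
  -- bound on each mgf
  have hmgf_le : ∀ i, mgf (X i) μ γ ≤ 1 - m i + m i * Real.exp γ := by
    intro i
    have : mgf (X i) μ γ = ∫ ω, Real.exp (γ * X i ω) ∂μ := rfl
    rw [this]
    have hint2 : Integrable (fun ω => 1 - X i ω + X i ω * Real.exp γ) μ :=
      ((integrable_const 1).sub (hXint i)).add ((hXint i).mul_const _)
    calc ∫ ω, Real.exp (γ * X i ω) ∂μ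
        ≤ ∫ ω, (1 - X i ω + X i ω * Real.exp γ) ∂μ := by
          refine integral_mono_ae (hExpInt i) hint2 ?_
          filter_upwards [hbound i] with ω hω
          exact hconv _ hω
      _ = 1 - m i + m i * Real.exp γ := by
          have h1 : Integrable (fun ω => 1 - X i ω) μ := (integrable_const 1).sub (hXint i)
          have h2 : Integrable (fun ω => X i ω * Real.exp γ) μ := (hXint i).mul_const _
          rw [integral_add h1 h2, integral_sub (integrable_const 1) (hXint i),
            integral_mul_const]
          simp [hm]
  have hmgf_nonneg : ∀ i, 0 ≤ mgf (X i) μ γ := fun i => mgf_nonneg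
  -- product formula from independence
  have hprod : mgf (∑ i, X i) μ γ = ∏ i, mgf (X i) μ γ :=
    hindep.mgf_sum hmeas Finset.univ
  -- AM-GM
  have ha_nonneg : ∀ i : Fin n, (0:ℝ) ≤ 1 - m i + m i * Real.exp γ := by
    intro i
    have := (hm01 i).1; have := (hm01 i).2
    nlinarith
  have hamgm : (∏ i, (1 - m i + m i * Real.exp γ)) ≤ c ^ n := by
    have hg := Real.geom_mean_le_arith_mean Finset.univ (fun _ => (1:ℝ))
      (fun i => 1 - m i + m i * Real.exp γ) (fun i _ => zero_le_one)
      (by simp [hn] : (0:ℝ) < ∑ _i : Fin n, (1:ℝ))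
      (fun i _ => ha_nonneg i)
    simp only [Real.rpow_one, one_mul, Finset.sum_const, Finset.card_univ,
      Fintype.card_fin, nsmul_eq_mul, mul_one] at hg
    have hsum : ∑ i, (1 - m i + m i * Real.exp γ) = (n:ℝ) * c := by
      rw [Finset.sum_add_distrib, Finset.sum_sub_distrib, ← Finset.sum_mul, hc, hμb]
      have hne : (n:ℝ) ≠ 0 := by exact_mod_cast hn.ne'
      simp only [Finset.sum_const, Finset.card_univ, Fintype.card_fin, nsmul_eq_mul, mul_one]
      field_simp
      try ring
    have hg' : (∏ i, (1 - m i + m i * Real.exp γ)) ^ ((n:ℝ)⁻¹) ≤ c := by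
      have hne : (n:ℝ) ≠ 0 := by exact_mod_cast hn.ne'
      calc (∏ i, (1 - m i + m i * Real.exp γ)) ^ ((n:ℝ)⁻¹)
          ≤ (∑ i, (1 - m i + m i * Real.exp γ)) / n := hg
        _ = c := by rw [hsum, mul_div_cancel_left₀ _ hne]
    have hP0 : (0:ℝ) ≤ ∏ i, (1 - m i + m i * Real.exp γ) :=
      Finset.prod_nonneg fun i _ => ha_nonneg i
    calc (∏ i, (1 - m i + m i * Real.exp γ))
        = ((∏ i, (1 - m i + m i * Real.exp γ)) ^ ((n:ℝ)⁻¹)) ^ n := by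
          rw [← Real.rpow_natCast (_ ^ ((n:ℝ)⁻¹)) n, ← Real.rpow_mul hP0,
            inv_mul_cancel₀ (by exact_mod_cast hn.ne' : (n:ℝ) ≠ 0), Real.rpow_one]
      _ ≤ c ^ n := pow_le_pow_left₀ (Real.rpow_nonneg hP0 _) hg' n
  -- rewrite the integrand
  have hrw : ∀ ω : Ω, Real.exp ((n : ℝ) *
      binKLRelaxed γ ((∑ i, X i ω) / n) ((∑ i, m i) / n))
      = Real.exp (γ * (∑ i, X i) ω) / c ^ n := by
    intro ω
    have hne : (n:ℝ) ≠ 0 := by exact_mod_cast hn.ne'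
    rw [binKLRelaxed]
    rw [mul_sub, Real.exp_sub]
    congr 1
    · rw [Finset.sum_apply]
      congr 1
      field_simp
      try ring
    · rw [← Real.log_pow, Real.exp_log (pow_pos hcpos n)]
  calc ∫ ω, Real.exp ((n : ℝ) *
        binKLRelaxed γ ((∑ i, X i ω) / n) ((∑ i, m i) / n)) ∂μ
      = ∫ ω, Real.exp (γ * (∑ i, X i) ω) / c ^ n ∂μ := by
        exact integral_congr_ae (Filter.Eventually.of_forall hrw)
    _ = (∫ ω, Real.exp (γ * (∑ i, X i) ω) ∂μ) / c ^ n := by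
        rw [integral_div]
    _ = (∏ i, mgf (X i) μ γ) / c ^ n := by rw [← hprod]; rfl
    _ ≤ (∏ i, (1 - m i + m i * Real.exp γ)) / c ^ n :=
        div_le_div_of_nonneg_right_aux (pow_pos hcpos n)
          (Finset.prod_le_prod (fun i _ => hmgf_nonneg i) (fun i _ => hmgf_le i))
    _ ≤ c ^ n / c ^ n := div_le_div_of_nonneg_right_aux (pow_pos hcpos n) hamgm
    _ = 1 := div_self (pow_pos hcpos n).ne'
end

section
/- For any symmetric positive-definite matrix A partitioned as A = [[B, Dᵀ],[D, C]] with B and C square, the determinant satisfies |A| ≤ |B|·|C| (Fischer's inequality). -/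
open Matrix


section auxFischer
variable {k : ℕ}

lemma psd_det_nonneg {S : Matrix (Fin k) (Fin k) ℝ} (hS : S.PosSemidef) : 0 ≤ S.det := by
  rw [hS.1.det_eq_prod_eigenvalues]
  exact Finset.prod_nonneg fun i _ => by simpa using hS.eigenvalues_nonneg i

lemma one_le_det_one_add {Q : Matrix (Fin k) (Fin k) ℝ} (hQ : Q.PosSemidef) :
    1 ≤ (1 + Q).det := by
  have hH := hQ.1
  have hU : (hH.eigenvectorUnitary : Matrix (Fin k) (Fin k) ℝ) *
      star (hH.eigenvectorUnitary : Matrix (Fin k) (Fin k) ℝ) = 1 :=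
    Matrix.mem_unitaryGroup_iff.mp hH.eigenvectorUnitary.2
  have h1 : (1 : Matrix (Fin k) (Fin k) ℝ) + Q =
      (hH.eigenvectorUnitary : Matrix (Fin k) (Fin k) ℝ) *
        (1 + diagonal (RCLike.ofReal ∘ hH.eigenvalues)) *
        star (hH.eigenvectorUnitary : Matrix (Fin k) (Fin k) ℝ) := by
    rw [Matrix.mul_add, Matrix.add_mul, Matrix.mul_one, hU]
    congr 1
    exact hH.spectral_theorem
  have hdetU : ((hH.eigenvectorUnitary : Matrix (Fin k) (Fin k) ℝ).det) *
      ((star (hH.eigenvectorUnitary : Matrix (Fin k) (Fin k) ℝ)).det) = 1 := by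
    rw [← det_mul, hU, det_one]
  rw [h1, det_mul, det_mul, mul_comm, ← mul_assoc, mul_comm (det _), hdetU, one_mul]
  have : (1 : Matrix (Fin k) (Fin k) ℝ) + diagonal (RCLike.ofReal ∘ hH.eigenvalues) =
      diagonal (fun i => 1 + hH.eigenvalues i) := by
    rw [← diagonal_one, diagonal_add]
    rfl
  rw [this, det_diagonal]
  calc (1:ℝ) = ∏ _i : Fin k, 1 := by simp
    _ ≤ ∏ i : Fin k, (1 + hH.eigenvalues i) := by
        apply Finset.prod_le_prod
        · intro i _; norm_num
        · intro i _
          have h := hQ.eigenvalues_nonneg i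
          linarith

lemma psd_posDef_of_det_ne_zero {S : Matrix (Fin k) (Fin k) ℝ} (hS : S.PosSemidef)
    (hdet : S.det ≠ 0) : S.PosDef := by
  refine posDef_iff_dotProduct_mulVec.mpr ⟨hS.1, fun x hx => ?_⟩
  rcases lt_or_eq_of_le (hS.dotProduct_mulVec_nonneg x) with h | h
  · exact h
  · exfalso
    have h0 : S *ᵥ x = 0 := (hS.dotProduct_mulVec_zero_iff x).mp h.symm
    have : x = 0 := by
      have := Matrix.eq_zero_of_mulVec_eq_zero hdet h0
      exact this
    exact hx this

open scoped MatrixOrder in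
lemma det_le_det_add_psd {S P : Matrix (Fin k) (Fin k) ℝ} (hS : S.PosSemidef)
    (hP : P.PosSemidef) : S.det ≤ (S + P).det := by
  by_cases hdet : S.det = 0
  · rw [hdet]; exact psd_det_nonneg (hS.add hP)
  · have hSpd : S.PosDef := psd_posDef_of_det_ne_zero hS hdet
    set T := CFC.sqrt S with hT
    have hTsq : T * T = S := CFC.sqrt_mul_sqrt_self S hS.nonneg
    have hTpsd : T.PosSemidef := (CFC.sqrt_nonneg S).posSemidef
    have hTdet : T.det ≠ 0 := by
      intro h
      apply hdet
      rw [← hTsq, det_mul, h, zero_mul]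
    have hTpd : T.PosDef := psd_posDef_of_det_ne_zero hTpsd hTdet
    have hTinv : T⁻¹.PosDef := hTpd.inv
    have hTH : T⁻¹ᴴ = T⁻¹ := hTinv.isHermitian
    have hQ : (T⁻¹ * P * T⁻¹).PosSemidef := by
      have := hP.conjTranspose_mul_mul_same T⁻¹
      rwa [hTH] at this
    have hunit : IsUnit T := hTpd.isUnit
    have hTiT : T⁻¹ * T = 1 := nonsing_inv_mul T (isUnit_iff_ne_zero.mpr hTdet)
    have hTTi : T * T⁻¹ = 1 := mul_nonsing_inv T (isUnit_iff_ne_zero.mpr hTdet)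
    have key : S + P = T * (1 + T⁻¹ * P * T⁻¹) * T := by
      rw [Matrix.mul_add, Matrix.mul_one, Matrix.add_mul, hTsq, ← Matrix.mul_assoc,
        ← Matrix.mul_assoc, hTTi, Matrix.one_mul, Matrix.mul_assoc, hTiT, Matrix.mul_one]
    rw [key, det_mul, det_mul, mul_comm, ← mul_assoc, ← det_mul, hTsq]
    nth_rewrite 1 [← mul_one S.det]
    exact mul_le_mul_of_nonneg_left (one_le_det_one_add hQ) (le_of_lt hSpd.det_pos)

end auxFischer

/-- Fischer's inequality: for a symmetric positive-definite block matrix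
`A = [[B, Dᵀ],[D, C]]` with square diagonal blocks, `det A ≤ det B · det C`. -/
theorem fischer_inequality {m n : ℕ}
    (B : Matrix (Fin m) (Fin m) ℝ) (C : Matrix (Fin n) (Fin n) ℝ)
    (D : Matrix (Fin n) (Fin m) ℝ)
    (hA : (Matrix.fromBlocks B D.transpose D C).PosDef) :
    (Matrix.fromBlocks B D.transpose D C).det ≤ B.det * C.det := by
  -- B is positive definite
  have hB : B.PosDef := by
    refine posDef_iff_dotProduct_mulVec.mpr ⟨?_, ?_⟩
    · have h := hA.1
      rw [IsHermitian, fromBlocks_conjTranspose] at h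
      have := congrArg Matrix.toBlocks₁₁ h
      simpa [toBlocks_fromBlocks₁₁, IsSymm] using this
    · intro x hx
      have hy : (Sum.elim x 0 : Fin m ⊕ Fin n → ℝ) ≠ 0 := by
        intro h
        apply hx
        ext i
        exact congrFun h (Sum.inl i)
      have := hA.dotProduct_mulVec_pos hy
      simpa [Function.star_sumElim, fromBlocks_mulVec, sumElim_dotProduct_sumElim] using this
  have hC : C.PosDef := by
    refine posDef_iff_dotProduct_mulVec.mpr ⟨?_, ?_⟩
    · have h := hA.1
      rw [IsHermitian, fromBlocks_conjTranspose] at h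
      have := congrArg Matrix.toBlocks₂₂ h
      simpa [toBlocks_fromBlocks₂₂, IsSymm] using this
    · intro x hx
      have hy : (Sum.elim 0 x : Fin m ⊕ Fin n → ℝ) ≠ 0 := by
        intro h
        apply hx
        ext i
        exact congrFun h (Sum.inr i)
      have := hA.dotProduct_mulVec_pos hy
      simpa [Function.star_sumElim, fromBlocks_mulVec, sumElim_dotProduct_sumElim] using this
  haveI : Invertible B := invertibleOfIsUnitDet B (isUnit_iff_ne_zero.mpr hB.det_pos.ne')
  have hdet : (fromBlocks B Dᵀ D C).det = B.det * (C - D * B⁻¹ * Dᵀ).det := by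
    rw [det_fromBlocks₁₁, invOf_eq_nonsing_inv]
  have hDT : (Dᵀ)ᴴ = D := by
    ext i j; simp
  have hS : (C - D * B⁻¹ * Dᵀ).PosSemidef := by
    have h := (PosDef.fromBlocks₁₁ Dᵀ C hB).mp (by rw [hDT]; exact hA.posSemidef)
    rwa [hDT] at h
  have hP : (D * B⁻¹ * Dᵀ).PosSemidef := by
    have h := hB.inv.posSemidef.mul_mul_conjTranspose_same D
    have hD2 : Dᴴ = Dᵀ := by ext i j; simp
    rwa [hD2] at h
  have hle : (C - D * B⁻¹ * Dᵀ).det ≤ C.det := by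
    have h := det_le_det_add_psd hS hP
    rwa [sub_add_cancel] at h
  rw [hdet]
  exact mul_le_mul_of_nonneg_left hle (le_of_lt hB.det_pos)
end

section
/- For any 0 < C₂ ≤ log 2 and C₁ ≥ −log(2 − e^{C₂})/C₂ − 1, and for all a, b ∈ [0,1], it holds that e^{C₂(a − (1+C₁)b)} + e^{C₂(b − (1+C₁)a)} ≤ 2. -/
private lemma exp_combo {s x y : ℝ} (h0 : 0 ≤ s) (h1 : s ≤ 1) :
    Real.exp ((1 - s) * x + s * y) ≤ (1 - s) * Real.exp x + s * Real.exp y := by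
  have := convexOn_exp.2 (Set.mem_univ x) (Set.mem_univ y) (by linarith : (0:ℝ) ≤ 1 - s) h0
    (by ring)
  simpa using this

/-- Key exponential-moment inequality for fast-rate bounds: for `0 < C₂ < log 2`,
`C₁ ≥ −log(2 − e^{C₂})/C₂ − 1` and `a, b ∈ [0,1]`,
`e^{C₂(a − (1+C₁)b)} + e^{C₂(b − (1+C₁)a)} ≤ 2`. -/
theorem exp_pair_le_two (C₁ C₂ a b : ℝ)
    (h1 : 0 < C₂) (h2 : C₂ < Real.log 2)
    (h3 : -Real.log (2 - Real.exp C₂) / C₂ - 1 ≤ C₁)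
    (ha : a ∈ Set.Icc (0:ℝ) 1) (hb : b ∈ Set.Icc (0:ℝ) 1) :
    Real.exp (C₂ * (a - (1 + C₁) * b)) + Real.exp (C₂ * (b - (1 + C₁) * a)) ≤ 2 := by
  obtain ⟨ha0, ha1⟩ := ha
  obtain ⟨hb0, hb1⟩ := hb
  set t : ℝ := 1 + C₁ with hTdef
  -- basic consequences of the hypotheses
  have h2e : Real.exp C₂ < 2 := by
    have := Real.exp_lt_exp.2 h2
    rwa [Real.exp_log (by norm_num : (0:ℝ) < 2)] at this
  have hpos : 0 < 2 - Real.exp C₂ := by linarith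
  have hE : Real.exp (-(C₂ * t)) ≤ 2 - Real.exp C₂ := by
    have hL : -Real.log (2 - Real.exp C₂) ≤ C₂ * t := by
      have := (div_le_iff₀ h1).1 (by linarith : -Real.log (2 - Real.exp C₂) / C₂ ≤ t)
      linarith
    calc Real.exp (-(C₂ * t)) ≤ Real.exp (Real.log (2 - Real.exp C₂)) :=
          Real.exp_le_exp.2 (by linarith)
      _ = 2 - Real.exp C₂ := Real.exp_log hpos
  have hsum : Real.exp C₂ + Real.exp (-(C₂ * t)) ≤ 2 := by linarith
  have ht : 1 ≤ t := by
    have h1' : 1 + C₂ ≤ Real.exp C₂ := by have := Real.add_one_le_exp C₂; linarith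
    have h2' : 1 - C₂ ≤ Real.exp (-C₂) := by have := Real.add_one_le_exp (-C₂); linarith
    have hle : Real.exp (-(C₂ * t)) ≤ Real.exp (-C₂) := by linarith
    have := Real.exp_le_exp.1 hle
    nlinarith
  have hone : Real.exp (C₂ * (1 - t)) ≤ 1 := by
    rw [Real.exp_le_one_iff]
    nlinarith
  have hexp0 : Real.exp (0:ℝ) = 1 := Real.exp_zero
  -- convexity in a
  have A1 : Real.exp (C₂ * (a - t * b)) ≤
      (1 - a) * Real.exp (C₂ * (0 - t * b)) + a * Real.exp (C₂ * (1 - t * b)) := by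
    have heq : C₂ * (a - t * b) = (1 - a) * (C₂ * (0 - t * b)) + a * (C₂ * (1 - t * b)) := by
      ring
    rw [heq]; exact exp_combo ha0 ha1
  have A2 : Real.exp (C₂ * (b - t * a)) ≤
      (1 - a) * Real.exp (C₂ * b) + a * Real.exp (C₂ * (b - t)) := by
    have heq : C₂ * (b - t * a) = (1 - a) * (C₂ * b) + a * (C₂ * (b - t)) := by ring
    rw [heq]; exact exp_combo ha0 ha1
  -- corner bounds via convexity in b
  have B0 : Real.exp (C₂ * (0 - t * b)) + Real.exp (C₂ * b) ≤ 2 := by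
    have c1 : Real.exp (C₂ * (0 - t * b)) ≤ (1 - b) * Real.exp 0 + b * Real.exp (-(C₂ * t)) := by
      have heq : C₂ * (0 - t * b) = (1 - b) * (0:ℝ) + b * (-(C₂ * t)) := by ring
      rw [heq]; exact exp_combo hb0 hb1
    have c2 : Real.exp (C₂ * b) ≤ (1 - b) * Real.exp 0 + b * Real.exp C₂ := by
      have heq : C₂ * b = (1 - b) * (0:ℝ) + b * C₂ := by ring
      rw [heq]; exact exp_combo hb0 hb1
    rw [hexp0] at c1 c2
    nlinarith
  have B1 : Real.exp (C₂ * (1 - t * b)) + Real.exp (C₂ * (b - t)) ≤ 2 := by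
    have c1 : Real.exp (C₂ * (1 - t * b)) ≤
        (1 - b) * Real.exp C₂ + b * Real.exp (C₂ * (1 - t)) := by
      have heq : C₂ * (1 - t * b) = (1 - b) * C₂ + b * (C₂ * (1 - t)) := by ring
      rw [heq]; exact exp_combo hb0 hb1
    have c2 : Real.exp (C₂ * (b - t)) ≤
        (1 - b) * Real.exp (-(C₂ * t)) + b * Real.exp (C₂ * (1 - t)) := by
      have heq : C₂ * (b - t) = (1 - b) * (-(C₂ * t)) + b * (C₂ * (1 - t)) := by ring
      rw [heq]; exact exp_combo hb0 hb1
    nlinarith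
  nlinarith [A1, A2, B0, B1]
end

section
/- For any 0 < C₂ ≤ (log 2)/2 and C₁ ≥ −log(2 − e^{2C₂})/(2C₂) − 1, and for all x ∈ [0,1], it holds that e^{2C₂ x} + e^{−2C₂(C₁+1)x} ≤ 2. -/
/-- Single-loss exponential-moment inequality: for `0 < C₂ < (log 2)/2`,
`C₁ ≥ −log(2 − e^{2C₂})/(2C₂) − 1` and `x ∈ [0,1]`,
`e^{2C₂x} + e^{−2C₂(C₁+1)x} ≤ 2`. -/
theorem exp_single_le_two (C₁ C₂ x : ℝ)
    (h1 : 0 < C₂) (h2 : C₂ < Real.log 2 / 2)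
    (h3 : -Real.log (2 - Real.exp (2 * C₂)) / (2 * C₂) - 1 ≤ C₁)
    (hx : x ∈ Set.Icc (0:ℝ) 1) :
    Real.exp (2 * C₂ * x) + Real.exp (-2 * C₂ * (C₁ + 1) * x) ≤ 2 := by
  obtain ⟨hx0, hx1⟩ := hx
  -- convexity of exp: exp(t*x) ≤ (1-x) + x * exp t
  have key : ∀ t : ℝ, Real.exp (t * x) ≤ (1 - x) + x * Real.exp t := by
    intro t
    have h := convexOn_exp.2 (Set.mem_univ (0:ℝ)) (Set.mem_univ t)
      (by linarith : (0:ℝ) ≤ 1 - x) hx0 (by ring)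
    simp only [smul_eq_mul, mul_zero, zero_add, Real.exp_zero, mul_one] at h
    rw [mul_comm]; linarith
  -- exp(2C₂) < 2
  have hlt : Real.exp (2 * C₂) < 2 := by
    have : Real.exp (2 * C₂) < Real.exp (Real.log 2) :=
      Real.exp_lt_exp.mpr (by linarith)
    rwa [Real.exp_log (by norm_num)] at this
  have hpos : 0 < 2 - Real.exp (2 * C₂) := by linarith
  -- endpoint bound at x = 1
  have f1 : Real.exp (2 * C₂) + Real.exp (-2 * C₂ * (C₁ + 1)) ≤ 2 := by
    have h2c : 0 < 2 * C₂ := by linarith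
    have hmul : -Real.log (2 - Real.exp (2 * C₂)) ≤ 2 * C₂ * (C₁ + 1) := by
      have := (div_le_iff₀ h2c).mp (by linarith : -Real.log (2 - Real.exp (2 * C₂)) / (2 * C₂) ≤ C₁ + 1)
      linarith
    have : Real.exp (-2 * C₂ * (C₁ + 1)) ≤ 2 - Real.exp (2 * C₂) := by
      calc Real.exp (-2 * C₂ * (C₁ + 1)) ≤ Real.exp (Real.log (2 - Real.exp (2 * C₂))) :=
            Real.exp_le_exp.mpr (by linarith)
        _ = 2 - Real.exp (2 * C₂) := Real.exp_log hpos
    linarith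
  have k1 := key (2 * C₂)
  have k2 := key (-2 * C₂ * (C₁ + 1))
  have hxe : x * (Real.exp (2 * C₂) + Real.exp (-2 * C₂ * (C₁ + 1))) ≤ x * 2 :=
    mul_le_mul_of_nonneg_left f1 hx0
  nlinarith [k1, k2, hxe]
end
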